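/- ∑_{j=0}^∞ binom(1/2, j)^2 = 4/π, where binom(1/2, j) = (1/2)(1/2 - 1)⋯(1/2 - j + 1)/j! is the generalized binomial coefficient. -/

import Mathlib

open scoped Real
open Filter Finset Topology

/-- The generalized binomial coefficient `r(r-1)⋯(r-j+1)/j!`. -/
noncomputable def gbinom (r : ℝ) (j : ℕ) : ℝ :=
  (∏ k ∈ Finset.range j, (r - k)) / (Nat.factorial j)

noncomputable def qq (n : ℕ) : ℝ := ∏ i ∈ Finset.range n, (2 * (i:ℝ) + 1) / (2 * i + 2)

lemma qq_succ (n : ℕ) : qq (n+1) = qq n * ((2 * (n:ℝ) + 1) / (2 * n + 2)) := by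
  rw [qq, qq, Finset.prod_range_succ]

lemma gbinom_succ (r : ℝ) (j : ℕ) :
    gbinom r (j+1) = gbinom r j * ((r - j) / (j + 1)) := by
  have h : (Nat.factorial j : ℝ) ≠ 0 := Nat.cast_ne_zero.2 (Nat.factorial_ne_zero j)
  have h2 : ((j:ℝ) + 1) ≠ 0 := by positivity
  rw [gbinom, gbinom, Finset.prod_range_succ, Nat.factorial_succ]
  push_cast
  rw [div_mul_div_comm, mul_comm ((j:ℝ) + 1)]

lemma gbinom_sq (j : ℕ) :
    gbinom (1/2) (j+1) ^ 2 * (2 * (j:ℝ) + 1) ^ 2 = qq (j+1) ^ 2 := by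
  induction j with
  | zero =>
    simp [gbinom, qq]
  | succ n ih =>
    rw [gbinom_succ, qq_succ]
    have h1 : (2 * (n:ℝ) + 1) ≠ 0 := by positivity
    have h2 : ((n:ℝ) + 1 + 1) ≠ 0 := by positivity
    have key : gbinom (1/2) (n+1) ^ 2 = qq (n+1) ^ 2 / (2 * (n:ℝ) + 1) ^ 2 := by
      field_simp at ih ⊢; linarith [ih]
    rw [mul_pow, mul_pow, key]
    push_cast
    field_simp
    ring

lemma partial_sum (N : ℕ) :
    ∑ j ∈ Finset.range (N+1), gbinom (1/2) j ^ 2 = (4 * (N:ℝ) + 1) * qq N ^ 2 := by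
  induction N with
  | zero => simp [gbinom, qq]
  | succ n ih =>
    rw [Finset.sum_range_succ, ih]
    have h1 : (2 * (n:ℝ) + 1) ≠ 0 := by positivity
    have key : gbinom (1/2) (n+1) ^ 2 = qq (n+1) ^ 2 / (2 * (n:ℝ) + 1) ^ 2 := by
      have := gbinom_sq n
      field_simp; linarith [this]
    rw [key, qq_succ]
    have h2 : ((n:ℝ) + 1 + 1) ≠ 0 := by positivity
    push_cast
    field_simp
    ring

lemma qq_pos (n : ℕ) : 0 < qq n := by
  apply Finset.prod_pos
  intro i _
  positivity

lemma wallis_rel (k : ℕ) :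
    (∏ i ∈ range k, ((2 : ℝ) * i + 2) / (2 * i + 1) * ((2 * i + 2) / (2 * i + 3)))
      * ((2 * (k:ℝ) + 1) * qq k ^ 2) = 1 := by
  induction k with
  | zero => simp [qq]
  | succ n ih =>
    rw [Finset.prod_range_succ, qq_succ]
    have h1 : (2 * (n:ℝ) + 1) ≠ 0 := by positivity
    have h2 : (2 * (n:ℝ) + 2) ≠ 0 := by positivity
    have h3 : (2 * (n:ℝ) + 3) ≠ 0 := by positivity
    push_cast
    field_simp at ih ⊢
    linear_combination (2*(n:ℝ)+3) * ih

lemma tendsto_part :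
    Tendsto (fun N : ℕ => (4 * (N:ℝ) + 1) * qq N ^ 2) atTop (𝓝 (4 / π)) := by
  have hpi : (0:ℝ) < π := Real.pi_pos
  have hW := Real.tendsto_prod_pi_div_two
  -- (2N+1) * qq N ^ 2 = (W N)⁻¹
  have h1 : Tendsto (fun N : ℕ => (2 * (N:ℝ) + 1) * qq N ^ 2) atTop (𝓝 (2 / π)) := by
    have : Tendsto (fun k : ℕ => (∏ i ∈ range k,
        ((2 : ℝ) * i + 2) / (2 * i + 1) * ((2 * i + 2) / (2 * i + 3)))⁻¹) atTop
        (𝓝 ((π/2)⁻¹)) := hW.inv₀ (by positivity)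
    have heq : ∀ k : ℕ, (∏ i ∈ range k,
        ((2 : ℝ) * i + 2) / (2 * i + 1) * ((2 * i + 2) / (2 * i + 3)))⁻¹
        = (2 * (k:ℝ) + 1) * qq k ^ 2 := by
      intro k
      exact inv_eq_of_mul_eq_one_right (wallis_rel k)
    rw [show ((π/2)⁻¹ : ℝ) = 2 / π by rw [inv_div]] at this
    exact this.congr heq
  have h2 : Tendsto (fun N : ℕ => (4 * (N:ℝ) + 1) / (2 * N + 1)) atTop (𝓝 2) := by
    have h3 : Tendsto (fun N : ℕ => 2 - 1 / (2 * (N:ℝ) + 1)) atTop (𝓝 (2 - 0)) := by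
      apply Tendsto.const_sub
      simp only [one_div]
      apply Tendsto.comp tendsto_inv_atTop_zero
      apply Filter.tendsto_atTop_add_const_right
      exact (tendsto_natCast_atTop_atTop (R := ℝ)).const_mul_atTop two_pos
    simp only [sub_zero] at h3
    apply h3.congr
    intro N
    have : (2 * (N:ℝ) + 1) ≠ 0 := by positivity
    field_simp
    ring
  have := h1.mul h2
  rw [show (2/π)*2 = 4/π by ring] at this
  apply this.congr
  intro N
  have : (2 * (N:ℝ) + 1) ≠ 0 := by positivity
  field_simp

theorem stmt4 : (∑' j : ℕ, gbinom (1/2) j ^ 2) = 4 / π := by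
  have hs : HasSum (fun j : ℕ => gbinom (1/2) j ^ 2) (4 / π) := by
    rw [hasSum_iff_tendsto_nat_of_nonneg (fun i => sq_nonneg _)]
    have h := tendsto_part
    have h2 : Tendsto (fun N : ℕ => ∑ j ∈ Finset.range (N+1), gbinom (1/2) j ^ 2)
        atTop (𝓝 (4 / π)) := by
      apply h.congr
      intro N
      exact (partial_sum N).symm
    exact (tendsto_add_atTop_iff_nat 1).mp h2
  exact hs.tsum_eq
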